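/- The polynomial $g(x) = x^{n+1} - 2x^n + 1$, for $n \ge 2$, has exactly one real root in the open interval $(2n/(n+1), 2)$. -/

import Mathlib

theorem key_nat (n : ℕ) (hn : 2 ≤ n) : (n+1)^(n+1) < 2^(n+1) * n^n := by
  induction n with
  | zero => omega
  | succ m ih =>
    rcases Nat.lt_or_ge m 2 with hm | hm
    · interval_cases m
      · omega
      · norm_num
    · have IH := ih hm
      have hpos : 0 < m^(m+1) := Nat.pow_pos (by omega)
      have hAM : (m+2) * m ≤ (m+1)^2 := by nlinarith
      have h1 : ((m+2) * m)^(m+1) ≤ ((m+1)^2)^(m+1) := Nat.pow_le_pow_left hAM _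
      have key : (m+2)^(m+2) * m^(m+1) < (2^(m+2) * (m+1)^(m+1)) * m^(m+1) := by
        calc (m+2)^(m+2) * m^(m+1) = (m+2) * (((m+2)*m)^(m+1)) := by
              rw [mul_pow]; ring
          _ ≤ (m+2) * (((m+1)^2)^(m+1)) := Nat.mul_le_mul_left _ h1
          _ = (m+2) * ((m+1)^(m+1) * (m+1)^(m+1)) := by rw [← pow_mul, two_mul, pow_add]
          _ < (m+2) * ((m+1)^(m+1) * (2^(m+1) * m^m)) := by
              have h2 : 0 < (m+1)^(m+1) := Nat.pow_pos (by omega)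
              gcongr
          _ ≤ (2*m) * ((m+1)^(m+1) * (2^(m+1) * m^m)) := by
              gcongr
              omega
          _ = (2^(m+2) * (m+1)^(m+1)) * m^(m+1) := by ring
      exact Nat.lt_of_mul_lt_mul_right key

/-- For `n ≥ 2`, the polynomial `g(x) = x^(n+1) - 2x^n + 1` has exactly one real root in
the open interval `(2n/(n+1), 2)`. -/
theorem unique_root_in_interval (n : ℕ) (hn : 2 ≤ n) :
    ∃! x : ℝ, x ∈ Set.Ioo (2 * n / (n + 1) : ℝ) 2 ∧ x ^ (n + 1) - 2 * x ^ n + 1 = 0 := by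
  set g : ℝ → ℝ := fun x => x ^ (n + 1) - 2 * x ^ n + 1 with hg
  set a : ℝ := 2 * n / (n + 1) with ha
  have hn1 : (0:ℝ) < (n:ℝ) + 1 := by positivity
  have hn0 : (0:ℝ) < (n:ℝ) := by exact_mod_cast Nat.lt_of_lt_of_le (by norm_num) hn
  have ha0 : 0 < a := by positivity
  have ha2 : a < 2 := by
    rw [ha, div_lt_iff₀ hn1]; linarith
  have hcont : Continuous g := by continuity
  -- g(a) < 0
  have keyR : ((n:ℝ)+1)^(n+1) < 2^(n+1) * (n:ℝ)^n := by
    exact_mod_cast key_nat n hn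
  have h2a : 2 - a = 2/((n:ℝ)+1) := by
    rw [ha]; field_simp; ring
  have hprod : 1 < a ^ n * (2 - a) := by
    rw [h2a, ha, div_pow, div_mul_div_comm, lt_div_iff₀ (by positivity), one_mul,
      mul_pow, ← pow_succ]
    calc ((n:ℝ)+1)^(n+1) < 2^(n+1) * (n:ℝ)^n := keyR
      _ = 2^n * (n:ℝ)^n * 2 := by ring
  have hga : g a < 0 := by
    have : g a = 1 - a ^ n * (2 - a) := by
      simp only [hg, pow_succ]; ring
    rw [this]; linarith
  have hg2 : g 2 = 1 := by simp only [hg, pow_succ]; ring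
  -- strict monotonicity on Icc a 2
  have hmono : StrictMonoOn g (Set.Icc a 2) := by
    apply strictMonoOn_of_deriv_pos (convex_Icc _ _) hcont.continuousOn
    intro x hx
    rw [interior_Icc] at hx
    have hx0 : 0 < x := lt_trans ha0 hx.1
    have hd : HasDerivAt g ((↑(n+1)) * x ^ (n + 1 - 1) - 2 * ((↑n) * x ^ (n - 1))) x :=
      (((hasDerivAt_pow (n+1) x)).sub ((hasDerivAt_pow n x).const_mul 2)).add_const 1
    rw [hd.deriv]
    have hxa : 2 * (n:ℝ) < ((n:ℝ)+1) * x := by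
      have := hx.1
      rw [ha, div_lt_iff₀ hn1] at this
      linarith
    have hxn : x ^ n = x ^ (n - 1) * x := by
      rw [← pow_succ]; congr 1; omega
    have hxp : 0 < x ^ (n - 1) := pow_pos hx0 _
    have : (↑(n+1):ℝ) * x ^ (n + 1 - 1) - 2 * ((↑n) * x ^ (n - 1))
        = x ^ (n - 1) * (((n:ℝ)+1) * x - 2 * n) := by
      push_cast
      simp only [Nat.add_sub_cancel, hxn]
      ring
    rw [this]
    exact mul_pos hxp (by linarith)
  -- existence via IVT
  have hivt := intermediate_value_Ioo (le_of_lt ha2) hcont.continuousOn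
  have h0mem : (0:ℝ) ∈ Set.Ioo (g a) (g 2) := by
    rw [hg2]; exact ⟨hga, by norm_num⟩
  obtain ⟨x, hxmem, hxval⟩ := hivt h0mem
  refine ⟨x, ⟨hxmem, hxval⟩, ?_⟩
  rintro y ⟨hymem, hyval⟩
  have hsub : Set.Ioo a 2 ⊆ Set.Icc a 2 := Set.Ioo_subset_Icc_self
  exact hmono.injOn (hsub hymem) (hsub hxmem) (by rw [hg] at *; simp only at hyval hxval ⊢; rw [hyval, hxval])
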